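/- Let N ⊂ k[x₁,x₂,x₃] be the escalier of a strongly stable monomial ideal J, with ρ_{i,j} = |{a : x₁ᵃx₂^{j-1}x₃^{i-1} ∈ N}| and αᵢ the number of j with ρ_{i,j} > 0. Then in addition to strict decrease along rows, the shifted comparison ρ_{i,j} ≥ ρ_{i+1,j-1} holds whenever ρ_{i+1,j-1} > 0 and j ≥ 2; equivalently, setting π_{i,j} := ρ_{i, j-i+1} (shifting row i right by i-1), the array π is a shifted (1,0)-plane partition: π_{i,j} > π_{i,j+1} along rows and π_{i,j} ≥ π_{i+1,j} down columns. -/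
import Mathlib


def MonomialIdeal {n : ℕ} (I : Set (Fin n → ℕ)) : Prop :=
  ∀ τ ∈ I, ∀ σ : Fin n → ℕ, τ + σ ∈ I

def IsStronglyStable {n : ℕ} (I : Set (Fin n → ℕ)) : Prop :=
  ∀ τ ∈ I, ∀ i j : Fin n, τ i ≠ 0 → i < j →
    τ - Pi.single i 1 + Pi.single j 1 ∈ I

def mon3 (a b c : ℕ) : Fin 3 → ℕ := ![a, b, c]

lemma downclosed_mem_iff (S : Set ℕ) (hfin : S.Finite)
    (hdc : ∀ a b : ℕ, a ≤ b → b ∈ S → a ∈ S) :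
    ∀ a, a ∈ S ↔ a < Nat.card S := by
  intro a
  rw [Nat.card_coe_set_eq]
  constructor
  · intro ha
    have hsub : Set.Iic a ⊆ S := fun x hx => hdc x a hx ha
    have := Set.ncard_le_ncard hsub hfin
    have : (Set.Iic a).ncard = a + 1 := by
      rw [← Nat.card_coe_set_eq, Nat.card_eq_card_toFinset]
      simp
    omega
  · intro ha
    by_contra h
    have hsub : S ⊆ Set.Iio a := by
      intro b hb
      by_contra hb'
      exact h (hdc a b (not_lt.mp hb') hb)
    have := Set.ncard_le_ncard hsub (Set.finite_Iio a)
    have : (Set.Iio a).ncard = a := by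
      rw [← Nat.card_coe_set_eq, Nat.card_eq_card_toFinset]
      simp
    omega

lemma single0 : (Pi.single (0:Fin 3) (1:ℕ)) = ![1,0,0] := by
  funext k; fin_cases k <;> simp [Pi.single_apply]

lemma single1 : (Pi.single (1:Fin 3) (1:ℕ)) = ![0,1,0] := by
  funext k; fin_cases k <;> simp [Pi.single_apply]

lemma single2 : (Pi.single (2:Fin 3) (1:ℕ)) = ![0,0,1] := by
  funext k; fin_cases k <;> simp [Pi.single_apply]

theorem strongly_stable_escalier_gives_shifted_plane_partition
    (J : Set (Fin 3 → ℕ)) (hJ : MonomialIdeal J) (hst : IsStronglyStable J)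
    (hfin : {τ : Fin 3 → ℕ | τ ∉ J}.Finite)
    (ρ : ℕ → ℕ → ℕ)
    (hρ : ∀ i j, ρ i j = Nat.card {a : ℕ | mon3 a j i ∉ J}) :
    (∀ i j, 0 < ρ i (j + 1) → ρ i (j + 1) < ρ i j) ∧
    (∀ i j, 0 < ρ (i + 1) j → ρ (i + 1) j ≤ ρ i (j + 1)) := by
  have hSfin : ∀ i j : ℕ, {a : ℕ | mon3 a j i ∉ J}.Finite := by
    intro i j
    have : {a : ℕ | mon3 a j i ∉ J} = (fun a => mon3 a j i) ⁻¹' {τ | τ ∉ J} := rfl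
    rw [this]
    apply Set.Finite.preimage _ hfin
    intro x _ y _ hxy
    have := congrFun hxy 0
    simpa [mon3] using this
  have hSdc : ∀ i j : ℕ, ∀ a b : ℕ, a ≤ b → b ∈ {a : ℕ | mon3 a j i ∉ J} →
      a ∈ {a : ℕ | mon3 a j i ∉ J} := by
    intro i j a b hab hb
    simp only [Set.mem_setOf_eq] at hb ⊢
    intro ha
    apply hb
    have := hJ _ ha (mon3 (b - a) 0 0)
    have heq : mon3 a j i + mon3 (b - a) 0 0 = mon3 b j i := by
      ext k; fin_cases k <;> simp [mon3] <;> omega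
    rwa [heq] at this
  have hmem : ∀ i j a : ℕ, mon3 a j i ∉ J ↔ a < ρ i j := by
    intro i j a
    rw [hρ]
    exact downclosed_mem_iff _ (hSfin i j) (hSdc i j) a
  constructor
  · intro i j hpos
    have h0 : mon3 (ρ i (j+1) - 1) (j+1) i ∉ J := (hmem i (j+1) _).mpr (by omega)
    have h1 : mon3 (ρ i (j+1)) j i ∉ J := by
      intro hJmem
      apply h0
      have := hst _ hJmem 0 1 (by simp [mon3]; omega) (by decide)
      have heq : mon3 (ρ i (j+1)) j i - Pi.single 0 1 + Pi.single 1 1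
          = mon3 (ρ i (j+1) - 1) (j+1) i := by
        ext k; fin_cases k <;> simp [mon3, single0, single1, single2] <;> omega
      rwa [heq] at this
    have := (hmem i j _).mp h1
    omega
  · intro i j hpos
    have h0 : mon3 (ρ (i+1) j - 1) j (i+1) ∉ J := (hmem (i+1) j _).mpr (by omega)
    have h1 : mon3 (ρ (i+1) j - 1) (j+1) i ∉ J := by
      intro hJmem
      apply h0
      have := hst _ hJmem 1 2 (by simp [mon3]) (by decide)
      have heq : mon3 (ρ (i+1) j - 1) (j+1) i - Pi.single 1 1 + Pi.single 2 1
          = mon3 (ρ (i+1) j - 1) j (i+1) := by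
        ext k; fin_cases k <;> simp [mon3, single0, single1, single2] <;> omega
      rwa [heq] at this
    have := (hmem i (j+1) _).mp h1
    omega
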